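/- Let α, β be countable ordinals with β < α, and suppose a compact Hausdorff space K′ is the one-point union (wedge at distinguished points) over n ∈ ℕ of compact spaces K_n where K_n is homeomorphic to [1, ω^{β_n}] with sup_n β_n = α and β_n < α for all n. If the distinguished point of each K_n is ω^{β_n}, then K′ is homeomorphic to [1, ω^α]. -/

import Mathlib

open Topology Ordinal Set Filter

private lemma continuous_ordinal_sub (c : Ordinal) :
    Continuous (fun z : Ordinal => z - c) := by
  rw [continuous_def]
  intro s hs
  rw [Ordinal.isOpen_iff] at hs ⊢
  intro o ho holim
  rcases lt_or_ge c o with hco | hoc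
  · have hlim2 : Order.IsSuccLimit (o - c) := Ordinal.isSuccLimit_sub holim.isSuccPrelimit hco
    obtain ⟨a, ha, hsub⟩ := hs _ ho hlim2
    refine ⟨c + a, Ordinal.lt_sub.1 ha, fun z hz => ?_⟩
    apply hsub
    constructor
    · exact Ordinal.lt_sub.2 hz.1
    · have hcz : c ≤ z := le_trans le_self_add hz.1.le
      have h2 : c + (z - c) < c + (o - c) := by
        rw [Ordinal.add_sub_cancel_of_le hcz, Ordinal.add_sub_cancel_of_le hco.le]
        exact hz.2
      exact (add_lt_add_iff_left c).1 h2
  · refine ⟨0, holim.pos, fun z hz => ?_⟩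
    have h1 : z - c = 0 := Ordinal.sub_eq_zero_iff_le.2 (hz.2.le.trans hoc)
    have h2 : o - c = 0 := Ordinal.sub_eq_zero_iff_le.2 hoc
    show z - c ∈ s
    rw [h1, ← h2]; exact ho

private lemma exists_cofinal_seq (o : Ordinal) (ho : Order.IsSuccLimit o) (hc : o.card ≤ Cardinal.aleph0) :
    ∃ f : ℕ → Ordinal, (∀ k, f k < o) ∧ (⨆ k, f k) = o := by
  have hcnt : (Set.Iio o).Countable := by
    rw [← Cardinal.le_aleph0_iff_set_countable, Ordinal.mk_Iio_ordinal]
    exact le_trans (Cardinal.lift_le.2 hc) (by simp)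
  obtain ⟨f, hf⟩ := hcnt.exists_eq_range ⟨0, ho.pos⟩
  refine ⟨f, fun k => ?_, ?_⟩
  · have : f k ∈ Set.Iio o := hf ▸ Set.mem_range_self k
    exact this
  · apply le_antisymm
    · exact Ordinal.iSup_le fun k => le_of_lt (by have : f k ∈ Set.Iio o := hf ▸ Set.mem_range_self k; exact this)
    · by_contra hlt
      push_neg at hlt
      have hsucc : Order.succ (⨆ k, f k) ∈ Set.Iio o := ho.succ_lt hlt
      rw [hf] at hsucc
      obtain ⟨k, hk⟩ := hsucc
      have h1 : f k ≤ ⨆ k, f k := Ordinal.le_iSup f k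
      rw [hk] at h1
      exact absurd h1 (not_le.2 (Order.lt_succ _))

private def psums (t : ℕ → Ordinal) : ℕ → Ordinal
  | 0 => 0
  | k + 1 => psums t k + t k

private lemma psums_mono (t : ℕ → Ordinal) : Monotone (psums t) :=
  monotone_nat_of_le_succ fun k => le_self_add

private lemma psums_lt {t : ℕ → Ordinal} {c : Ordinal} (hc : Ordinal.Principal (· + ·) c)
    (h0 : 0 < c) (ht : ∀ k, t k < c) : ∀ k, psums t k < c
  | 0 => h0
  | k + 1 => hc (psums_lt hc h0 ht k) (ht k)

private theorem stmt5_aux (β : ℕ → Ordinal) (T : Ordinal) (hT1 : 1 < T)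
    (δ : ℕ → ℕ → Ordinal) (σ : ℕ → Ordinal) (pr : ℕ × ℕ ≃ ℕ)
    (hδmono : ∀ n, Monotone (δ n)) (hδ0 : ∀ n, δ n 0 = 0) (hδlt : ∀ n k, δ n k < ω ^ β n)
    (hδcof : ∀ n x, 1 ≤ x → x < ω ^ β n → ∃ k, x ≤ δ n (k + 1))
    (hσ0 : σ 0 = 0) (hσmono : Monotone σ) (hσlt : ∀ m, σ m < T)
    (hσcof : ∀ y, y < T → ∃ m, y < σ m)
    (hlink : ∀ n k, σ (pr (n, k)) + (δ n (k + 1) - δ n k) = σ (pr (n, k) + 1)) :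
    Nonempty
      ((OnePoint (Σ n : ℕ, {x : ↥(Set.Icc (1 : Ordinal) (ω ^ β n)) // (x : Ordinal) ≠ ω ^ β n}))
        ≃ₜ ↥(Set.Icc (1 : Ordinal) T)) := by
  classical
  have hT0 : (0 : Ordinal) < T := zero_lt_one.trans hT1
  have hxlt : ∀ (n : ℕ) (x : {x : ↥(Set.Icc (1 : Ordinal) (ω ^ β n)) // (x : Ordinal) ≠ ω ^ β n}),
      (x : Ordinal) < ω ^ β n := fun n x => lt_of_le_of_ne x.1.2.2 x.2
  have hx1 : ∀ (n : ℕ) (x : {x : ↥(Set.Icc (1 : Ordinal) (ω ^ β n)) // (x : Ordinal) ≠ ω ^ β n}),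
      (1 : Ordinal) ≤ (x : Ordinal) := fun n x => x.1.2.1
  have hexK : ∀ (n : ℕ) (x : {x : ↥(Set.Icc (1 : Ordinal) (ω ^ β n)) // (x : Ordinal) ≠ ω ^ β n}),
      ∃ k, (x : Ordinal) ≤ δ n (k + 1) := fun n x => hδcof n _ (hx1 n x) (hxlt n x)
  set K : ∀ n : ℕ, {x : ↥(Set.Icc (1 : Ordinal) (ω ^ β n)) // (x : Ordinal) ≠ ω ^ β n} → ℕ :=
    fun n x => Nat.find (hexK n x) with hK
  have hK1 : ∀ (n : ℕ) (x : {x : ↥(Set.Icc (1 : Ordinal) (ω ^ β n)) // (x : Ordinal) ≠ ω ^ β n}), (x : Ordinal) ≤ δ n (K n x + 1) := fun n x => Nat.find_spec (hexK n x)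
  have hK2 : ∀ (n : ℕ) (x : {x : ↥(Set.Icc (1 : Ordinal) (ω ^ β n)) // (x : Ordinal) ≠ ω ^ β n}), δ n (K n x) < (x : Ordinal) := by
    intro n x
    cases hKe : K n x with
    | zero =>
      rw [hδ0]
      exact zero_lt_one.trans_le (hx1 n x)
    | succ j =>
      have hmin := Nat.find_min (hexK n x) (show j < K n x by omega)
      rw [not_le] at hmin
      exact hmin
  have hKuniq : ∀ (n : ℕ) (x : {x : ↥(Set.Icc (1 : Ordinal) (ω ^ β n)) // (x : Ordinal) ≠ ω ^ β n}) (j : ℕ), δ n j < (x : Ordinal) → (x : Ordinal) ≤ δ n (j + 1) → K n x = j := by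
    intro n x j h1 h2
    refine (Nat.find_eq_iff (hexK n x)).2 ⟨h2, fun i hi => ?_⟩
    exact not_le.2 (lt_of_le_of_lt (hδmono n (by omega : i + 1 ≤ j)) h1)
  -- the function on the disjoint sum
  set g : (Σ n : ℕ, {x : ↥(Set.Icc (1 : Ordinal) (ω ^ β n)) // (x : Ordinal) ≠ ω ^ β n}) → Ordinal :=
    fun q => σ (pr (q.1, K q.1 q.2)) + ((q.2 : Ordinal) - δ q.1 (K q.1 q.2)) with hg
  have hg_mem : ∀ q, σ (pr (q.1, K q.1 q.2)) < g q ∧ g q ≤ σ (pr (q.1, K q.1 q.2) + 1) := by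
    intro q
    constructor
    · have hpos : 0 < (q.2 : Ordinal) - δ q.1 (K q.1 q.2) :=
        Ordinal.lt_sub.2 (by rw [add_zero]; exact hK2 _ _)
      calc σ (pr (q.1, K q.1 q.2)) = σ (pr (q.1, K q.1 q.2)) + 0 := (add_zero _).symm
      _ < g q := add_lt_add_right hpos _
    · rw [← hlink q.1 (K q.1 q.2)]
      apply add_le_add_right
      rw [Ordinal.sub_le, Ordinal.add_sub_cancel_of_le (hδmono q.1 (Nat.le_succ _))]
      exact hK1 _ _
  have hg_lt : ∀ q, g q < T := fun q => lt_of_le_of_lt (hg_mem q).2 (hσlt _)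
  have hg_pos : ∀ q, 0 < g q := fun q => lt_of_le_of_lt zero_le (hg_mem q).1
  have hg_blocks : ∀ q q', pr (q.1, K q.1 q.2) < pr (q'.1, K q'.1 q'.2) → g q < g q' := by
    intro q q' h
    exact lt_of_le_of_lt (le_trans (hg_mem q).2 (hσmono (Nat.succ_le_of_lt h))) (hg_mem q').1
  have hg_inj : Function.Injective g := by
    intro q q' h
    rcases lt_trichotomy (pr (q.1, K q.1 q.2)) (pr (q'.1, K q'.1 q'.2)) with hlt | heq | hgt
    · exact absurd h (ne_of_lt (hg_blocks _ _ hlt))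
    · have hpair : (q.1, K q.1 q.2) = (q'.1, K q'.1 q'.2) := pr.injective heq
      obtain ⟨n, x⟩ := q
      obtain ⟨n', x'⟩ := q'
      obtain rfl : n = n' := congrArg Prod.fst hpair
      have hk : K n x = K n x' := congrArg Prod.snd hpair
      simp only [hg] at h
      rw [hk] at h
      have hsub : (x : Ordinal) - δ n (K n x') = (x' : Ordinal) - δ n (K n x') :=
        (add_right_inj _).1 h
      have hxx : (x : Ordinal) = (x' : Ordinal) := by
        have e1 : δ n (K n x') + ((x : Ordinal) - δ n (K n x')) = (x : Ordinal) := by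
          rw [← hk]; exact Ordinal.add_sub_cancel_of_le (hK2 n x).le
        have e2 : δ n (K n x') + ((x' : Ordinal) - δ n (K n x')) = (x' : Ordinal) :=
          Ordinal.add_sub_cancel_of_le (hK2 n x').le
        rw [← e1, ← e2, hsub]
      congr 1
      exact Subtype.ext (Subtype.ext hxx)
    · exact absurd h.symm (ne_of_lt (hg_blocks _ _ hgt))
  -- the full map
  set F : OnePoint (Σ n : ℕ, {x : ↥(Set.Icc (1 : Ordinal) (ω ^ β n)) // (x : Ordinal) ≠ ω ^ β n})
      → Ordinal := fun p => Option.elim p T g with hF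
  have hFmem : ∀ p, F p ∈ Set.Icc (1 : Ordinal) T := by
    intro p
    cases p with
    | infty => exact ⟨hT1.le, le_rfl⟩
    | coe q => exact ⟨Order.one_le_iff_pos.2 (hg_pos q), (hg_lt q).le⟩
  set e : OnePoint (Σ n : ℕ, {x : ↥(Set.Icc (1 : Ordinal) (ω ^ β n)) // (x : Ordinal) ≠ ω ^ β n})
      → ↥(Set.Icc (1 : Ordinal) T) := fun p => ⟨F p, hFmem p⟩ with he
  have hinj : Function.Injective e := by
    intro p p' h
    have h' : F p = F p' := congrArg Subtype.val h
    cases p with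
    | infty =>
      cases p' with
      | infty => rfl
      | coe q' => exact absurd h'.symm (ne_of_lt (hg_lt q'))
    | coe q =>
      cases p' with
      | infty => exact absurd h' (ne_of_lt (hg_lt q))
      | coe q' => exact congrArg _ (hg_inj h')
  have hsurj : Function.Surjective e := by
    rintro ⟨y, hy1, hy2⟩
    rcases eq_or_lt_of_le hy2 with rfl | hyT
    · exact ⟨OnePoint.infty, Subtype.ext rfl⟩
    · have hex : ∃ m, y ≤ σ (m + 1) := by
        obtain ⟨m, hm⟩ := hσcof y hyT
        exact ⟨m, hm.le.trans (hσmono (Nat.le_succ m))⟩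
      set M := Nat.find hex with hMdef
      have hM1 : y ≤ σ (M + 1) := Nat.find_spec hex
      have hM2 : σ M < y := by
        cases hMe : M with
        | zero =>
          rw [hσ0]; exact zero_lt_one.trans_le hy1
        | succ j =>
          have hmin := Nat.find_min hex (show j < M by omega)
          rw [not_le] at hmin
          exact hmin
      have hprM : pr ((pr.symm M).1, (pr.symm M).2) = M := by
        rw [Prod.mk.eta]; exact pr.apply_symm_apply M
      have hσM1 : σ (M + 1) = σ M + (δ (pr.symm M).1 ((pr.symm M).2 + 1) - δ (pr.symm M).1 (pr.symm M).2) := by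
        have := hlink (pr.symm M).1 (pr.symm M).2
        rw [hprM] at this
        exact this.symm
      set w := y - σ M with hw
      have hw0 : 0 < w := Ordinal.lt_sub.2 (by rw [add_zero]; exact hM2)
      have hwle : w ≤ δ (pr.symm M).1 ((pr.symm M).2 + 1) - δ (pr.symm M).1 (pr.symm M).2 := by
        rw [hw, Ordinal.sub_le, ← hσM1]; exact hM1
      set x := δ (pr.symm M).1 (pr.symm M).2 + w with hx
      have hxle : x ≤ δ (pr.symm M).1 ((pr.symm M).2 + 1) := by
        rw [hx, ← Ordinal.add_sub_cancel_of_le (hδmono _ (Nat.le_succ (pr.symm M).2))]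
        exact add_le_add_right hwle _
      have hxgt : δ (pr.symm M).1 (pr.symm M).2 < x := by
        rw [hx]
        calc δ (pr.symm M).1 (pr.symm M).2 = δ (pr.symm M).1 (pr.symm M).2 + 0 := (add_zero _).symm
        _ < _ := add_lt_add_right hw0 _
      have hx1' : (1 : Ordinal) ≤ x := Order.one_le_iff_pos.2 (lt_of_le_of_lt zero_le hxgt)
      have hxltω : x < ω ^ β (pr.symm M).1 := lt_of_le_of_lt hxle (hδlt _ _)
      refine ⟨OnePoint.some ⟨(pr.symm M).1, ⟨⟨x, ⟨hx1', hxltω.le⟩⟩, ne_of_lt hxltω⟩⟩, ?_⟩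
      apply Subtype.ext
      show g _ = y
      have hKx : K (pr.symm M).1 ⟨⟨x, ⟨hx1', hxltω.le⟩⟩, ne_of_lt hxltω⟩ = (pr.symm M).2 :=
        hKuniq _ _ _ hxgt hxle
      show σ (pr ((pr.symm M).1, K (pr.symm M).1 _)) + (x - δ (pr.symm M).1 (K (pr.symm M).1 _)) = y
      rw [hKx, hprM, hx, Ordinal.add_sub_cancel]
      exact Ordinal.add_sub_cancel_of_le hM2.le
  -- continuity on the disjoint sum
  have hgc : Continuous g := by
    apply continuous_sigma
    intro n
    rw [continuous_iff_continuousAt]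
    intro x₀
    set U : Set ({x : ↥(Set.Icc (1 : Ordinal) (ω ^ β n)) // (x : Ordinal) ≠ ω ^ β n}) :=
      {x : {x : ↥(Set.Icc (1 : Ordinal) (ω ^ β n)) // (x : Ordinal) ≠ ω ^ β n} |
        δ n (K n x₀) < (x : Ordinal) ∧ (x : Ordinal) ≤ δ n (K n x₀ + 1)} with hUdef
    have hUopen : IsOpen U := by
      have hset : U = (fun x : {x : ↥(Set.Icc (1 : Ordinal) (ω ^ β n)) // (x : Ordinal) ≠ ω ^ β n} =>
              (x : Ordinal)) ⁻¹' (Set.Ioo (δ n (K n x₀)) (δ n (K n x₀ + 1) + 1)) := by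
        ext x
        simp only [hUdef, Set.mem_setOf_eq, Set.mem_preimage, Set.mem_Ioo]
        constructor
        · rintro ⟨h1, h2⟩
          exact ⟨h1, by rw [Ordinal.add_one_eq_succ]; exact Order.lt_succ_iff.2 h2⟩
        · rintro ⟨h1, h2⟩
          exact ⟨h1, by rw [Ordinal.add_one_eq_succ] at h2; exact Order.lt_succ_iff.1 h2⟩
      rw [hset]
      exact (continuous_subtype_val.comp continuous_subtype_val).isOpen_preimage _ isOpen_Ioo
    have hmemU : x₀ ∈ U := ⟨hK2 n x₀, hK1 n x₀⟩
    have hc2 : Continuous (fun x : {x : ↥(Set.Icc (1 : Ordinal) (ω ^ β n)) // (x : Ordinal) ≠ ω ^ β n} =>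
        σ (pr (n, K n x₀)) + ((x : Ordinal) - δ n (K n x₀))) := by
      have h1 : Continuous (fun z : Ordinal => σ (pr (n, K n x₀)) + z) :=
        (Ordinal.isNormal_add_right _).continuous
      exact h1.comp ((continuous_ordinal_sub _).comp (continuous_subtype_val.comp continuous_subtype_val))
    apply ContinuousAt.congr hc2.continuousAt
    apply Filter.eventuallyEq_of_mem (hUopen.mem_nhds hmemU)
    intro x hx
    show σ (pr (n, K n x₀)) + ((x : Ordinal) - δ n (K n x₀)) = g ⟨n, x⟩
    show _ = σ (pr (n, K n x)) + ((x : Ordinal) - δ n (K n x))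
    rw [hKuniq n x (K n x₀) hx.1 hx.2]
  -- continuity of the full map
  have hFc : Continuous F := by
    rw [OnePoint.continuous_iff]
    refine ⟨?_, hgc⟩
    rw [Filter.hasBasis_coclosedCompact.tendsto_left_iff]
    intro W hW
    obtain ⟨b, hbT, hbW⟩ := exists_Ioc_subset_of_mem_nhds hW ⟨0, hT0⟩
    obtain ⟨m₀, hm₀⟩ := hσcof b hbT
    refine ⟨g ⁻¹' Set.Iic (σ m₀), ⟨isClosed_Iic.preimage hgc, ?_⟩, ?_⟩
    · -- compactness
      set C : ℕ → Set (Σ n : ℕ, {x : ↥(Set.Icc (1 : Ordinal) (ω ^ β n)) // (x : Ordinal) ≠ ω ^ β n}) :=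
        fun m => Sigma.mk (pr.symm m).1 ''
          {x | (x : Ordinal) ∈ Set.Ioc (δ (pr.symm m).1 (pr.symm m).2) (δ (pr.symm m).1 ((pr.symm m).2 + 1))}
        with hCdef
      have hCcomp : ∀ m : ℕ, IsCompact (C m) := by
        intro m
        rw [hCdef]
        apply IsCompact.image ?_ continuous_sigmaMk
        have hemb : Topology.IsEmbedding (fun x : {x : ↥(Set.Icc (1 : Ordinal) (ω ^ β (pr.symm m).1)) //
            (x : Ordinal) ≠ ω ^ β (pr.symm m).1} => (x : Ordinal)) :=
          Topology.IsEmbedding.subtypeVal.comp Topology.IsEmbedding.subtypeVal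
        rw [hemb.isCompact_iff]
        have himg : ((fun x : {x : ↥(Set.Icc (1 : Ordinal) (ω ^ β (pr.symm m).1)) //
              (x : Ordinal) ≠ ω ^ β (pr.symm m).1} => (x : Ordinal)) ''
            {x | (x : Ordinal) ∈ Set.Ioc (δ (pr.symm m).1 (pr.symm m).2) (δ (pr.symm m).1 ((pr.symm m).2 + 1))})
            = Set.Ioc (δ (pr.symm m).1 (pr.symm m).2) (δ (pr.symm m).1 ((pr.symm m).2 + 1)) := by
          apply Set.Subset.antisymm
          · rintro z ⟨x, hx, rfl⟩; exact hx
          · intro z hz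
            have hz1 : (1 : Ordinal) ≤ z :=
              Order.one_le_iff_pos.2 (lt_of_le_of_lt zero_le hz.1)
            have hzlt : z < ω ^ β (pr.symm m).1 := lt_of_le_of_lt hz.2 (hδlt _ _)
            exact ⟨⟨⟨z, ⟨hz1, hzlt.le⟩⟩, ne_of_lt hzlt⟩, hz, rfl⟩
        rw [himg]
        have hIoc : Set.Ioc (δ (pr.symm m).1 (pr.symm m).2) (δ (pr.symm m).1 ((pr.symm m).2 + 1))
            = Set.Icc (δ (pr.symm m).1 (pr.symm m).2 + 1) (δ (pr.symm m).1 ((pr.symm m).2 + 1)) := by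
          ext z
          simp only [Set.mem_Ioc, Set.mem_Icc, Ordinal.add_one_eq_succ, Order.succ_le_iff]
        rw [hIoc]
        exact isCompact_Icc
      apply IsCompact.of_isClosed_subset
        ((Set.Finite.isCompact_biUnion (Finset.range m₀).finite_toSet) (fun m _ => hCcomp m))
        (isClosed_Iic.preimage hgc)
      intro q hq
      simp only [Set.mem_preimage, Set.mem_Iic] at hq
      have hmlt : pr (q.1, K q.1 q.2) < m₀ := by
        by_contra hge
        rw [not_lt] at hge
        exact absurd hq (not_le.2 (lt_of_le_of_lt (hσmono hge) (hg_mem q).1))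
      obtain ⟨n, x⟩ := q
      refine Set.mem_biUnion (show pr (n, K n x) ∈ ((Finset.range m₀ : Finset ℕ) : Set ℕ) by
        simp [hmlt]) ?_
      have hsymm : pr.symm (pr (n, K n x)) = (n, K n x) := pr.symm_apply_apply _
      rw [hCdef]
      simp only
      rw [hsymm]
      exact ⟨x, ⟨hK2 n x, hK1 n x⟩, rfl⟩
    · -- maps the complement into W
      intro q hq
      simp only [Set.mem_compl_iff, Set.mem_preimage, Set.mem_Iic, not_le] at hq
      exact hbW ⟨hm₀.trans hq, (hg_lt q).le⟩
  have hec : Continuous e := hFc.subtype_mk _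
  exact ⟨Continuous.homeoOfEquivCompactToT2 (f := Equiv.ofBijective e ⟨hinj, hsurj⟩) hec⟩
/-- A countable-cofinality one-point union of ordinal intervals `[1, ω^{β n}]`, wedged at
their top points `ω^{β n}`, with `sup β n = α` and `β n < α`, is homeomorphic to `[1, ω^α]`. -/
theorem stmt5 (α : Ordinal) (hα : α.card ≤ Cardinal.aleph0) (β : ℕ → Ordinal)
    (hβ : ∀ n, β n < α) (hsup : (⨆ n, β n) = α) :
    Nonempty
      ((OnePoint (Σ n : ℕ, {x : ↥(Set.Icc (1 : Ordinal) (ω ^ β n)) // (x : Ordinal) ≠ ω ^ β n}))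
        ≃ₜ ↥(Set.Icc (1 : Ordinal) (ω ^ α))) := by
  classical
  have hα0 : α ≠ 0 := by
    intro h
    exact absurd (hβ 0) (by rw [h]; exact not_lt_zero)
  have hprinT : Ordinal.Principal (· + ·) (ω ^ α) := Ordinal.principal_add_omega0_opow α
  have hT0 : (0 : Ordinal) < ω ^ α := Ordinal.opow_pos α Ordinal.omega0_pos
  have hT1 : (1 : Ordinal) < ω ^ α := by
    calc (1 : Ordinal) < ω := Ordinal.one_lt_omega0
    _ = ω ^ (1 : Ordinal) := (Ordinal.opow_one ω).symm
    _ ≤ ω ^ α := Ordinal.opow_le_opow_right Ordinal.omega0_pos (Ordinal.one_le_iff_ne_zero.2 hα0)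
  have hβT : ∀ n, ω ^ β n < ω ^ α := fun n =>
    (Ordinal.opow_lt_opow_iff_right Ordinal.one_lt_omega0).2 (hβ n)
  -- cofinal sequences inside each `ω ^ β n`
  have hseq : ∀ n : ℕ, ∃ v : ℕ → Ordinal,
      (∀ k, v k < ω ^ β n) ∧ (β n ≠ 0 → (⨆ k, v k) = ω ^ β n) := by
    intro n
    rcases Ordinal.zero_or_succ_or_isSuccLimit (β n) with h0 | ⟨γ, hγ⟩ | hlim
    · exact ⟨fun _ => 0, fun k => by rw [h0, Ordinal.opow_zero]; exact zero_lt_one,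
        fun h => absurd h0 h⟩
    · refine ⟨fun k => ω ^ γ * (k + 1 : ℕ), fun k => ?_, fun _ => ?_⟩
      · rw [← hγ, Ordinal.opow_succ]
        exact (Ordinal.isNormal_mul_right (Ordinal.opow_pos γ Ordinal.omega0_pos)).strictMono
          (Ordinal.nat_lt_omega0 _)
      · apply le_antisymm
        · apply Ordinal.iSup_le
          intro k
          rw [← hγ, Ordinal.opow_succ]
          exact mul_le_mul_right (Ordinal.nat_lt_omega0 _).le _
        · rw [← hγ, Ordinal.opow_succ, Ordinal.mul_le_iff_of_isSuccLimit Ordinal.isSuccLimit_omega0]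
          intro c hc
          obtain ⟨j, rfl⟩ := Ordinal.lt_omega0.1 hc
          refine le_trans ?_ (Ordinal.le_iSup (fun k => ω ^ γ * (k + 1 : ℕ)) j)
          exact mul_le_mul_right (by exact_mod_cast Nat.le_succ j) _
    · have hcard : (β n).card ≤ Cardinal.aleph0 := le_trans (Ordinal.card_le_card (hβ n).le) hα
      obtain ⟨f, hflt, hfsup⟩ := exists_cofinal_seq (β n) hlim hcard
      refine ⟨fun k => ω ^ f k,
        fun k => (Ordinal.opow_lt_opow_iff_right Ordinal.one_lt_omega0).2 (hflt k), fun _ => ?_⟩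
      rw [← hfsup]
      exact ((Ordinal.isNormal_opow Ordinal.one_lt_omega0).map_iSup Ordinal.bddAbove_of_small).symm
  choose u hult husup using hseq
  set δ : ℕ → ℕ → Ordinal := fun n => psums (u n) with hδdef
  set θ : ℕ → Ordinal := fun m => u (Nat.pairEquiv.symm m).1 (Nat.pairEquiv.symm m).2 with hθdef
  set σ : ℕ → Ordinal := fun m => psums θ m with hσdef
  have hθpair : ∀ n k, θ (Nat.pairEquiv (n, k)) = u n k := by
    intro n k
    rw [hθdef]
    simp only
    rw [Nat.pairEquiv.symm_apply_apply]
  have hθlt : ∀ m, θ m < ω ^ α := fun m => (hult _ _).trans (hβT _)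
  have hδmono : ∀ n, Monotone (δ n) := fun n => psums_mono (u n)
  have hδ0 : ∀ n, δ n 0 = 0 := fun n => rfl
  have hδlt : ∀ n k, δ n k < ω ^ β n := fun n k =>
    psums_lt (Ordinal.principal_add_omega0_opow (β n))
      (Ordinal.opow_pos _ Ordinal.omega0_pos) (hult n) k
  have hδcof : ∀ n x, 1 ≤ x → x < ω ^ β n → ∃ k, x ≤ δ n (k + 1) := by
    intro n x hx1 hxlt
    have hn0 : β n ≠ 0 := by
      intro h
      rw [h, Ordinal.opow_zero] at hxlt
      exact absurd hx1 (not_le.2 hxlt)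
    rw [← husup n hn0] at hxlt
    obtain ⟨k, hk⟩ := Ordinal.lt_iSup_iff.1 hxlt
    refine ⟨k, hk.le.trans ?_⟩
    show u n k ≤ psums (u n) k + u n k
    exact le_add_self
  have hσ0 : σ 0 = 0 := rfl
  have hσmono : Monotone σ := psums_mono θ
  have hσlt : ∀ m, σ m < ω ^ α := fun m => psums_lt hprinT hT0 hθlt m
  have hlink : ∀ n k,
      σ (Nat.pairEquiv (n, k)) + (δ n (k + 1) - δ n k) = σ (Nat.pairEquiv (n, k) + 1) := by
    intro n k
    have h1 : δ n (k + 1) - δ n k = u n k := by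
      show psums (u n) k + u n k - psums (u n) k = u n k
      exact Ordinal.add_sub_cancel _ _
    rw [h1]
    show psums θ _ + u n k = psums θ (Nat.pairEquiv (n, k)) + θ (Nat.pairEquiv (n, k))
    rw [hθpair]
  have hσcof : ∀ y, y < ω ^ α → ∃ m, y < σ m := by
    intro y hy
    have hkey : ∀ n, β n ≠ 0 → ω ^ β n ≤ ⨆ m, σ m := by
      intro n hn
      rw [← husup n hn]
      apply Ordinal.iSup_le
      intro k
      calc u n k = θ (Nat.pairEquiv (n, k)) := (hθpair n k).symm
      _ ≤ σ (Nat.pairEquiv (n, k) + 1) := by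
          show θ _ ≤ psums θ _ + θ _
          exact le_add_self
      _ ≤ ⨆ m, σ m := Ordinal.le_iSup σ _
    have hex0 : ∃ n, β n ≠ 0 := by
      by_contra hall
      push_neg at hall
      apply hα0
      rw [← hsup]
      simp [hall]
    have hTle : ω ^ α ≤ ⨆ m, σ m := by
      have hT : ω ^ α = ⨆ n, ω ^ β n := by
        rw [← hsup]
        exact (Ordinal.isNormal_opow Ordinal.one_lt_omega0).map_iSup Ordinal.bddAbove_of_small
      rw [hT]
      apply Ordinal.iSup_le
      intro n
      by_cases hn : β n = 0
      · rw [hn, Ordinal.opow_zero]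
        obtain ⟨n₀, hn₀⟩ := hex0
        exact le_trans (Ordinal.one_le_iff_ne_zero.2
          (Ordinal.opow_ne_zero _ Ordinal.omega0_ne_zero)) (hkey n₀ hn₀)
      · exact hkey n hn
    exact Ordinal.lt_iSup_iff.1 (lt_of_lt_of_le hy hTle)
  exact stmt5_aux β (ω ^ α) hT1 δ σ Nat.pairEquiv hδmono hδ0 hδlt hδcof hσ0 hσmono hσlt hσcof hlink
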